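/- Let F : ℝ^d → ℝ^d be an affine operator F(x) = Ax + a. If there exists a diagonal positive definite matrix H such that HA + AᵀH is positive definite, then F is a uniform P-function: there exists η > 0 such that for all x, y ∈ ℝ^d there is an index h with (F(x) − F(y))_h (x − y)_h ≥ η‖x − y‖₂². -/

import Mathlib

open Matrix

lemma aux_posdef_lb (d : ℕ) (hd : 0 < d) (M : Matrix (Fin d) (Fin d) ℝ) (hM : M.PosDef) :
    ∃ μ > (0:ℝ), ∀ z : Fin d → ℝ, μ * ∑ i, z i ^ 2 ≤ z ⬝ᵥ M.mulVec z := by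
  set E := EuclideanSpace ℝ (Fin d)
  have hg : Continuous fun z : Fin d → ℝ => z ⬝ᵥ M.mulVec z := by
    simp only [dotProduct, Matrix.mulVec]
    exact continuous_finset_sum _ fun i _ =>
      (continuous_apply i).mul (continuous_finset_sum _ fun j _ =>
        (continuous_const.mul (continuous_apply j)))
  have hf : Continuous fun z : E => z ⬝ᵥ M.mulVec z :=
    hg.comp (PiLp.continuousLinearEquiv 2 ℝ (fun _ : Fin d => ℝ)).continuous
  have hne : (Metric.sphere (0:E) 1).Nonempty := by
    refine ⟨EuclideanSpace.single ⟨0, hd⟩ 1, ?_⟩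
    rw [Metric.mem_sphere, dist_zero_right, EuclideanSpace.norm_single]; norm_num
  obtain ⟨u, hu, hmin⟩ := (isCompact_sphere (0:E) 1).exists_isMinOn hne hf.continuousOn
  have hu1 : ‖u‖ = 1 := by simpa using hu
  have hu0 : u ≠ 0 := by
    intro h; rw [h] at hu1; simp at hu1
  set μ := u ⬝ᵥ M.mulVec u with hμdef
  have hμ : 0 < μ := by
    have := hM.re_dotProduct_pos (x := u) (by simpa using hu0)
    simpa using this
  refine ⟨μ, hμ, fun z => ?_⟩
  by_cases hz : z = 0
  · simp [hz]
  · set zE : E := (WithLp.equiv 2 (Fin d → ℝ)).symm z with hzE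
    have hzE0 : zE ≠ 0 := fun h => hz congr(WithLp.equiv 2 (Fin d → ℝ) $h)
    have hr : (0:ℝ) < ‖zE‖ := norm_pos_iff.mpr hzE0
    have hsq : ‖zE‖ ^ 2 = ∑ i, z i ^ 2 := by
      rw [EuclideanSpace.norm_eq, Real.sq_sqrt (by positivity)]
      have hzz : ∀ i, zE i = z i := fun _ => rfl
      simp [sq_abs, hzz]
    have hsphere : (‖zE‖⁻¹ • zE) ∈ Metric.sphere (0:E) 1 := by
      simp [norm_smul, abs_of_pos (inv_pos.mpr hr), inv_mul_cancel₀ hr.ne']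
    have hmin' : μ ≤ (‖zE‖⁻¹ • zE) ⬝ᵥ M.mulVec (‖zE‖⁻¹ • zE) := hmin hsphere
    have hhom : (‖zE‖⁻¹ • zE) ⬝ᵥ M.mulVec (‖zE‖⁻¹ • zE)
        = ‖zE‖⁻¹ ^ 2 * (z ⬝ᵥ M.mulVec z) := by
      have : (‖zE‖⁻¹ • zE : E) = (‖zE‖⁻¹ • z : Fin d → ℝ) := rfl
      rw [this, Matrix.mulVec_smul, smul_dotProduct, dotProduct_smul]
      simp [smul_eq_mul]; rw [show zE.ofLp = z from rfl]; ring
    rw [hhom] at hmin'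
    have := mul_le_mul_of_nonneg_left hmin' (le_of_lt (by positivity : (0:ℝ) < ‖zE‖^2))
    calc μ * ∑ i, z i ^ 2 = ‖zE‖^2 * μ := by rw [hsq]; ring
      _ ≤ ‖zE‖^2 * (‖zE‖⁻¹ ^ 2 * (z ⬝ᵥ M.mulVec z)) := this
      _ = z ⬝ᵥ M.mulVec z := by field_simp

/-- If `F(x) = Ax + a` and there is a diagonal positive definite `H` with
`HA + AᵀH ≻ 0`, then `F` is a uniform P-function: there is `η > 0` such that for all
`x, y` some coordinate `h` satisfies `(F(x) - F(y))_h (x - y)_h ≥ η ‖x - y‖₂²`. -/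
theorem stmt5 (d : ℕ) (hd : 0 < d) (A : Matrix (Fin d) (Fin d) ℝ) (a : Fin d → ℝ)
    (H : Fin d → ℝ) (hH : ∀ i, 0 < H i)
    (hpd : (Matrix.diagonal H * A + Aᵀ * Matrix.diagonal H).PosDef) :
    ∃ η > (0 : ℝ), ∀ x y : Fin d → ℝ, ∃ h : Fin d,
      η * ∑ i, (x i - y i) ^ 2 ≤
        ((A.mulVec x + a) h - (A.mulVec y + a) h) * (x h - y h) := by
  obtain ⟨μ, hμ, hlb⟩ := aux_posdef_lb d hd _ hpd
  obtain ⟨imax, -, hmax⟩ := Finset.exists_max_image Finset.univ H ⟨⟨0, hd⟩, Finset.mem_univ _⟩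
  set Hm := H imax with hHm
  have hHm0 : 0 < Hm := hH imax
  have hd0 : (0:ℝ) < d := by exact_mod_cast hd
  refine ⟨μ / (2 * d * Hm), by positivity, fun x y => ?_⟩
  set z : Fin d → ℝ := fun i => x i - y i with hz
  set w : Fin d → ℝ := A.mulVec z with hw
  set S : ℝ := ∑ i, z i ^ 2 with hS
  have hS0 : 0 ≤ S := Finset.sum_nonneg fun i _ => sq_nonneg _
  have key : z ⬝ᵥ (Matrix.diagonal H * A + Aᵀ * Matrix.diagonal H).mulVec z
      = 2 * ∑ i, H i * (w i * z i) := by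
    rw [Matrix.add_mulVec, dotProduct_add, ← Matrix.mulVec_mulVec,
      Matrix.dotProduct_mulVec z (Aᵀ * Matrix.diagonal H) z, ← Matrix.vecMul_vecMul]
    have h1 : z ⬝ᵥ (Matrix.diagonal H).mulVec w = ∑ i, z i * (H i * w i) := by
      simp [dotProduct, Matrix.mulVec_diagonal]
    have h2 : Matrix.vecMul z Aᵀ = w := by
      rw [Matrix.vecMul_transpose]
    rw [h1, h2]
    have h3 : Matrix.vecMul w (Matrix.diagonal H) ⬝ᵥ z = ∑ i, (w i * H i) * z i := by
      simp [dotProduct, Matrix.vecMul_diagonal]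
    rw [h3, Finset.mul_sum, ← Finset.sum_add_distrib]
    exact Finset.sum_congr rfl fun i _ => by ring
  have hsum : ∑ _i : Fin d, (μ / (2 * d)) * S ≤ ∑ i, H i * (w i * z i) := by
    have := hlb z
    rw [key] at this
    rw [Finset.sum_const, Finset.card_univ, Fintype.card_fin, nsmul_eq_mul]
    have e : (d:ℝ) * (μ / (2 * d) * S) = μ * S / 2 := by field_simp
    rw [e]; linarith
  obtain ⟨h, -, hh⟩ := Finset.exists_le_of_sum_le (s := (Finset.univ : Finset (Fin d))) ⟨⟨0, hd⟩, Finset.mem_univ _⟩ hsum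
  refine ⟨h, ?_⟩
  have hwz : ((A.mulVec x + a) h - (A.mulVec y + a) h) * (x h - y h) = w h * z h := by
    simp only [hw, hz, Pi.add_apply]
    have : A.mulVec (fun i => x i - y i) h = A.mulVec x h - A.mulVec y h := by
      have : (fun i => x i - y i) = x - y := rfl
      rw [this, Matrix.mulVec_sub]; rfl
    rw [this]; ring
  rw [hwz]
  have step1 : μ / (2 * d) * S / H h ≤ w h * z h := by
    rw [div_le_iff₀ (hH h)]
    linarith [hh]
  have step2 : μ / (2 * d * Hm) * S ≤ μ / (2 * d) * S / H h := by
    rw [div_mul_eq_mul_div, div_mul_eq_mul_div, div_div,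
      div_le_div_iff₀ (by positivity) (mul_pos (by positivity) (hH h))]
    nlinarith [mul_le_mul_of_nonneg_left (hmax h (Finset.mem_univ h))
      (by positivity : (0:ℝ) ≤ μ * S * (2 * d))]
  linarith
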